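/- Fix $t\ge 1$ and $\tilde r\ge 0$. For $\lambda>0$ define $f(\lambda) = \frac{t\lambda}{\sqrt{t^2+t\lambda^2}} + \tilde r$. Then for every integer $\ell\ge 0$ there is a constant $C_\ell$ (independent of $t$ and $\tilde r$) such that $\left|\partial_\lambda^\ell\big(f(\lambda)^{-1}\big)\right| \le C_\ell\, \lambda^{-1-\ell}$ for all $0 < \lambda < 2\sqrt{t}$. -/

import Mathlib

set_option maxHeartbeats 1000000

open Set Finset Nat

noncomputable def gbp4 : ℝ → ℝ := fun u => u / Real.sqrt (1 + u ^ 2)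

lemma gbp4_contDiff (n : ℕ) : ContDiff ℝ n gbp4 := by
  apply ContDiff.div contDiff_id
  · exact (contDiff_const.add (contDiff_id.pow 2)).sqrt fun x => by positivity
  · intro x
    have h : (0:ℝ) < 1 + x ^ 2 := by positivity
    positivity

lemma itd_const_mul (a : ℝ) (F : ℝ → ℝ) (n : ℕ) :
    iteratedDeriv n (fun x => a * F x) = fun x => a * iteratedDeriv n F x := by
  induction n with
  | zero => simp
  | succ n ih =>
    rw [iteratedDeriv_succ, ih, deriv_const_mul_field', iteratedDeriv_succ]

lemma itd_add_const (c : ℝ) (F : ℝ → ℝ) (n : ℕ) :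
    iteratedDeriv (n + 1) (fun x => F x + c) = iteratedDeriv (n + 1) F := by
  have h : (deriv fun x => F x + c) = deriv F := deriv_add_const' c
  rw [iteratedDeriv_succ', iteratedDeriv_succ', h]

lemma itd_amul_inv (n : ℕ) (a : ℝ) (z : ℝ) :
    iteratedDeriv n (fun z : ℝ => a * z⁻¹) z
      = a * ((∏ i ∈ Finset.range n, (-1 - i : ℝ)) * z ^ (-1 - n : ℤ)) := by
  have h := itd_const_mul a (fun w : ℝ => w⁻¹) n
  rw [show (fun x : ℝ => a * (fun w : ℝ => w⁻¹) x) = fun z : ℝ => a * z⁻¹ from rfl] at h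
  rw [h]
  show a * iteratedDeriv n (fun w : ℝ => w⁻¹) z = _
  congr 1
  rw [iteratedDeriv_eq_iterate]
  have hp : ∀ m : ℕ, (∏ i ∈ Finset.range m, (-1 - (i:ℝ))) = (-1) ^ m * (m ! : ℝ) := by
    intro m
    induction m with
    | zero => simp
    | succ m ih => rw [Finset.prod_range_succ, ih, Nat.factorial_succ]; push_cast; ring
  rw [hp]
  exact iter_deriv_inv n z

lemma abs_prod_neg_one_sub (n : ℕ) :
    |∏ i ∈ Finset.range n, (-1 - (i : ℝ))| = (n ! : ℝ) := by
  induction n with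
  | zero => simp
  | succ n ih =>
    rw [Finset.prod_range_succ, abs_mul, ih,
      abs_of_nonpos (show (-1 - (n:ℝ)) ≤ 0 by push_cast; linarith [Nat.cast_nonneg (α := ℝ) n])]
    push_cast [Nat.factorial_succ]
    ring

/-- Derivative bounds (I-bp4) for the reciprocal of `f(λ) = tλ/√(t²+tλ²) + r̃`. -/
theorem stmt3 (ℓ : ℕ) :
    ∃ C : ℝ, 0 < C ∧ ∀ t rt : ℝ, 1 ≤ t → 0 ≤ rt →
      ∀ lam : ℝ, 0 < lam → lam < 2 * Real.sqrt t →
        |iteratedDeriv ℓ (fun x : ℝ => (t * x / Real.sqrt (t^2 + t * x^2) + rt)⁻¹) lam| ≤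
          C * lam ^ (-1 - (ℓ : ℝ)) := by
  classical
  -- bounds for derivatives of gbp4 on [0,2]
  have hMex : ∀ i : ℕ, ∃ M : ℝ, 0 ≤ M ∧
      ∀ u ∈ Set.Icc (0:ℝ) 2, |iteratedDeriv i gbp4 u| ≤ M := by
    intro i
    obtain ⟨M, hM⟩ := isCompact_Icc.exists_bound_of_continuousOn
      (((gbp4_contDiff i).continuous_iteratedDeriv i le_rfl).continuousOn
        (s := Set.Icc (0:ℝ) 2))
    exact ⟨max M 0, le_max_right _ _,
      fun u hu => le_trans (by simpa using hM u hu) (le_max_left _ _)⟩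
  choose M hM0 hMb using hMex
  set S : ℝ := ∑ i ∈ Finset.range (ℓ + 1), M i with hS
  have hSnn : 0 ≤ S := Finset.sum_nonneg fun i _ => hM0 i
  have hMS : ∀ i, i ≤ ℓ → M i ≤ S := fun i hi =>
    Finset.single_le_sum (fun j _ => hM0 j) (Finset.mem_range.mpr (Nat.lt_succ_of_le hi))
  set K : ℝ := 2 * (1 + S) with hK
  have hK2 : (2:ℝ) ≤ K := by nlinarith
  have hKpos : (0:ℝ) < K := by linarith
  have h5 : (1:ℝ) ≤ Real.sqrt 5 := by
    rw [show (1:ℝ) = Real.sqrt 1 from (Real.sqrt_one).symm]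
    exact Real.sqrt_le_sqrt (by norm_num)
  have h5pos : (0:ℝ) < Real.sqrt 5 := lt_of_lt_of_le one_pos h5
  refine ⟨(ℓ ! : ℝ) * ((ℓ ! : ℝ) * Real.sqrt 5 ^ (ℓ + 1)) * K ^ ℓ, ?_, ?_⟩
  · have h1 : (0:ℝ) < (ℓ ! : ℝ) := Nat.cast_pos.mpr (Nat.factorial_pos ℓ)
    have h2 : (0:ℝ) < Real.sqrt 5 ^ (ℓ + 1) := pow_pos h5pos _
    have h3 : (0:ℝ) < K ^ ℓ := pow_pos hKpos _
    positivity
  intro t rt ht hrt lam hlam hlam2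
  have hlam0 : lam ≠ 0 := ne_of_gt hlam
  set st := Real.sqrt t with hst
  have hst1 : 1 ≤ st := by
    rw [hst, show (1:ℝ) = Real.sqrt 1 from (Real.sqrt_one).symm]
    exact Real.sqrt_le_sqrt ht
  have hstpos : 0 < st := lt_of_lt_of_le one_pos hst1
  have hst0 : st ≠ 0 := ne_of_gt hstpos
  have htpos : (0:ℝ) < t := lt_of_lt_of_le one_pos ht
  have hst2 : st ^ 2 = t := Real.sq_sqrt htpos.le
  set f : ℝ → ℝ := fun x => t * x / Real.sqrt (t ^ 2 + t * x ^ 2) + rt with hf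
  have hden : ∀ x : ℝ, 0 < t ^ 2 + t * x ^ 2 := fun x => by nlinarith [sq_nonneg x]
  -- rescaling identity
  have hfeq : ∀ x : ℝ, t * x / Real.sqrt (t ^ 2 + t * x ^ 2) = st * gbp4 (st⁻¹ * x) := by
    intro x
    have hu2 : (st⁻¹ * x) ^ 2 = x ^ 2 / t := by
      rw [mul_pow, ← hst2]; field_simp
    have e1 : t ^ 2 + t * x ^ 2 = t ^ 2 * (1 + (st⁻¹ * x) ^ 2) := by
      rw [hu2]; field_simp
    have e2 : Real.sqrt (t ^ 2 + t * x ^ 2) = t * Real.sqrt (1 + (st⁻¹ * x) ^ 2) := by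
      rw [e1, Real.sqrt_mul (sq_nonneg t), Real.sqrt_sq htpos.le]
    have hsq : (0:ℝ) < 1 + (st⁻¹ * x) ^ 2 := by positivity
    have hsqrtne : Real.sqrt (1 + (st⁻¹ * x) ^ 2) ≠ 0 := by positivity
    rw [e2, gbp4]
    field_simp
  have hfs : ContDiff ℝ ℓ f := by
    apply ContDiff.add _ contDiff_const
    apply ContDiff.div (contDiff_const.mul contDiff_id)
    · exact (contDiff_const.add (contDiff_const.mul (contDiff_id.pow 2))).sqrt
        fun x => (hden x).ne'
    · intro x
      have := hden x
      positivity
  have hfpos : ∀ x ∈ Set.Ioi (0:ℝ), 0 < f x := by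
    intro x hx
    have h1 : 0 < t * x / Real.sqrt (t ^ 2 + t * x ^ 2) :=
      div_pos (mul_pos htpos hx) (Real.sqrt_pos.mpr (hden x))
    simp only [hf]
    linarith
  have hlamt : lam ^ 2 ≤ 4 * t := by
    have : lam < 2 * st := hlam2
    nlinarith
  have hflam_lb : lam / Real.sqrt 5 ≤ f lam := by
    have hle : Real.sqrt (t ^ 2 + t * lam ^ 2) ≤ Real.sqrt 5 * t := by
      rw [show Real.sqrt 5 * t = Real.sqrt (5 * t ^ 2) by
        rw [Real.sqrt_mul (by norm_num), Real.sqrt_sq htpos.le]]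
      exact Real.sqrt_le_sqrt (by nlinarith)
    have hsp : 0 < Real.sqrt (t ^ 2 + t * lam ^ 2) := Real.sqrt_pos.mpr (hden lam)
    have step : t * lam / (Real.sqrt 5 * t) ≤ t * lam / Real.sqrt (t ^ 2 + t * lam ^ 2) := by
      apply div_le_div_of_nonneg_left (by positivity) hsp hle
    have e : lam / Real.sqrt 5 = t * lam / (Real.sqrt 5 * t) := by
      field_simp
    rw [e]
    calc t * lam / (Real.sqrt 5 * t) ≤ t * lam / Real.sqrt (t ^ 2 + t * lam ^ 2) := step
      _ ≤ f lam := by simp only [hf]; linarith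
  -- inner and outer functions
  set Ft : ℝ → ℝ := fun x => lam⁻¹ * f x with hFt
  set Gt : ℝ → ℝ := fun z => lam⁻¹ * z⁻¹ with hGt
  have hcomp : (fun x : ℝ => (t * x / Real.sqrt (t ^ 2 + t * x ^ 2) + rt)⁻¹) = Gt ∘ Ft := by
    funext x
    simp only [hGt, hFt, Function.comp, ← hf]
    rw [mul_inv_rev, inv_inv,
      show lam⁻¹ * ((f x)⁻¹ * lam) = (f x)⁻¹ * (lam⁻¹ * lam) from by ring,
      inv_mul_cancel₀ hlam0, mul_one]
  have hlammem : lam ∈ Set.Ioi (0:ℝ) := hlam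
  have hmaps : Set.MapsTo Ft (Set.Ioi 0) (Set.Ioi 0) := fun x hx =>
    Set.mem_Ioi.mpr (mul_pos (inv_pos.mpr hlam) (hfpos x hx))
  have hGt_cd : ContDiffOn ℝ ℓ Gt (Set.Ioi 0) :=
    contDiffOn_const.mul (contDiffOn_id.inv fun z hz => ne_of_gt hz)
  have hFt_cd : ContDiffOn ℝ ℓ Ft (Set.Ioi 0) := (contDiff_const.mul hfs).contDiffOn
  -- bound on outer derivatives
  set Cg : ℝ := lam⁻¹ * ((ℓ ! : ℝ) * Real.sqrt 5 ^ (ℓ + 1)) with hCg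
  have hCb : ∀ i, i ≤ ℓ → ‖iteratedFDerivWithin ℝ i Gt (Set.Ioi 0) (Ft lam)‖ ≤ Cg := by
    intro i hi
    have hz : Ft lam ∈ Set.Ioi (0:ℝ) := hmaps hlammem
    have hzpos : 0 < Ft lam := hz
    rw [iteratedFDerivWithin_of_isOpen i isOpen_Ioi hz,
      norm_iteratedFDeriv_eq_norm_iteratedDeriv, Real.norm_eq_abs, hGt, itd_amul_inv]
    have hzlb : (Real.sqrt 5)⁻¹ ≤ Ft lam := by
      have h1 : lam⁻¹ * (lam / Real.sqrt 5) ≤ lam⁻¹ * f lam :=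
        mul_le_mul_of_nonneg_left hflam_lb (inv_nonneg.mpr hlam.le)
      have h2 : (Real.sqrt 5)⁻¹ = lam⁻¹ * (lam / Real.sqrt 5) := by field_simp
      rw [h2]; exact h1
    have hzp : |Ft lam ^ (-1 - (i : ℤ))| ≤ Real.sqrt 5 ^ (ℓ + 1) := by
      rw [abs_of_nonneg (zpow_nonneg hzpos.le _),
        show (-1 - (i : ℤ)) = -((i : ℤ) + 1) from by ring, zpow_neg,
        show ((i : ℤ) + 1) = ((i + 1 : ℕ) : ℤ) from by push_cast; ring, zpow_natCast]
      have hlow : ((Real.sqrt 5) ^ (i + 1))⁻¹ ≤ Ft lam ^ (i + 1) := by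
        rw [← inv_pow]
        exact pow_le_pow_left₀ (inv_nonneg.mpr h5pos.le) hzlb _
      have h1 : (Ft lam ^ (i + 1))⁻¹ ≤ Real.sqrt 5 ^ (i + 1) :=
        inv_le_of_inv_le₀ (pow_pos h5pos _) hlow
      exact h1.trans (pow_le_pow_right₀ h5 (by omega))
    rw [abs_mul, abs_mul, abs_of_pos (inv_pos.mpr hlam), abs_prod_neg_one_sub]
    rw [hCg]
    have hfac : (i ! : ℝ) ≤ (ℓ ! : ℝ) := Nat.cast_le.mpr (Nat.factorial_le hi)
    have h0 : (0:ℝ) ≤ (i ! : ℝ) := Nat.cast_nonneg _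
    apply mul_le_mul_of_nonneg_left _ (inv_nonneg.mpr hlam.le)
    exact mul_le_mul hfac hzp (abs_nonneg _) (Nat.cast_nonneg _)
  -- bound on inner derivatives
  have hDb : ∀ i, 1 ≤ i → i ≤ ℓ →
      ‖iteratedFDerivWithin ℝ i Ft (Set.Ioi 0) lam‖ ≤ (K * lam⁻¹) ^ i := by
    intro i h1i hiℓ
    obtain ⟨j, rfl⟩ : ∃ j, i = j + 1 := ⟨i - 1, by omega⟩
    rw [iteratedFDerivWithin_of_isOpen _ isOpen_Ioi hlammem,
      norm_iteratedFDeriv_eq_norm_iteratedDeriv, Real.norm_eq_abs]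
    have e0 : iteratedDeriv (j + 1) Ft lam = lam⁻¹ * iteratedDeriv (j + 1) f lam := by
      rw [hFt, itd_const_mul lam⁻¹ f (j + 1)]
    have ef : f = fun x => (fun y => st * gbp4 (st⁻¹ * y)) x + rt := by
      funext x
      simp only [hf]
      rw [hfeq x]
    have e1 : iteratedDeriv (j + 1) f lam
        = st * ((st⁻¹) ^ (j + 1) * iteratedDeriv (j + 1) gbp4 (st⁻¹ * lam)) := by
      rw [ef, itd_add_const, itd_const_mul st (fun y => gbp4 (st⁻¹ * y)) (j + 1),
        iteratedDeriv_comp_const_mul (gbp4_contDiff (j + 1)) st⁻¹]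
    have hinv2 : st⁻¹ * lam ≤ 2 := by
      have h1 : st⁻¹ * lam ≤ st⁻¹ * (2 * st) :=
        mul_le_mul_of_nonneg_left hlam2.le (inv_nonneg.mpr hstpos.le)
      rwa [show st⁻¹ * (2 * st) = 2 * (st⁻¹ * st) by ring, inv_mul_cancel₀ hst0,
        mul_one] at h1
    have hu : st⁻¹ * lam ∈ Set.Icc (0:ℝ) 2 := by
      constructor
      · positivity
      · exact hinv2
    have hgb := hMb (j + 1) (st⁻¹ * lam) hu
    rw [e0, e1]
    have eabs : |lam⁻¹ * (st * (st⁻¹ ^ (j + 1) * iteratedDeriv (j + 1) gbp4 (st⁻¹ * lam)))|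
        = lam⁻¹ * st * st⁻¹ ^ (j + 1) * |iteratedDeriv (j + 1) gbp4 (st⁻¹ * lam)| := by
      rw [abs_mul, abs_mul, abs_mul, abs_of_pos (inv_pos.mpr hlam), abs_of_pos hstpos,
        abs_of_pos (pow_pos (inv_pos.mpr hstpos) _)]
      ring
    rw [eabs]
    have hval : lam * st⁻¹ ≤ 2 := by rw [mul_comm]; exact hinv2
    have h2j : (lam * st⁻¹) ^ j ≤ 2 ^ j :=
      pow_le_pow_left₀ (by positivity) hval j
    have hKj : (2:ℝ) ^ j ≤ K ^ j := pow_le_pow_left₀ (by norm_num) hK2 j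
    have hMK : M (j + 1) * (lam * st⁻¹) ^ j ≤ K ^ (j + 1) := by
      have hMj : M (j + 1) ≤ 1 + S := le_trans (hMS _ hiℓ) (by linarith)
      have step1 : M (j + 1) * (lam * st⁻¹) ^ j ≤ (1 + S) * 2 ^ j :=
        mul_le_mul hMj h2j (by positivity) (by linarith)
      have step2 : (1 + S) * 2 ^ j ≤ K ^ (j + 1) := by
        rw [pow_succ]
        have h2jpos : (0:ℝ) < 2 ^ j := by positivity
        nlinarith [hKj, pow_pos hKpos j]
      linarith
    have hcoef : 0 ≤ lam⁻¹ * st * st⁻¹ ^ (j + 1) :=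
      mul_nonneg (mul_nonneg (inv_nonneg.mpr hlam.le) hstpos.le)
        (pow_nonneg (inv_nonneg.mpr hstpos.le) _)
    calc lam⁻¹ * st * st⁻¹ ^ (j + 1) * |iteratedDeriv (j + 1) gbp4 (st⁻¹ * lam)|
        ≤ lam⁻¹ * st * st⁻¹ ^ (j + 1) * M (j + 1) := mul_le_mul_of_nonneg_left hgb hcoef
      _ = lam⁻¹ ^ (j + 1) * (M (j + 1) * (lam * st⁻¹) ^ j) := by
          rw [show lam⁻¹ ^ (j + 1) * (M (j + 1) * (lam * st⁻¹) ^ j)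
              = lam⁻¹ * (lam * lam⁻¹) ^ j * st⁻¹ ^ j * M (j + 1) by ring,
            show lam⁻¹ * st * st⁻¹ ^ (j + 1) * M (j + 1)
              = lam⁻¹ * (st * st⁻¹) * st⁻¹ ^ j * M (j + 1) by ring,
            mul_inv_cancel₀ hlam0, mul_inv_cancel₀ hst0]
          ring
      _ ≤ lam⁻¹ ^ (j + 1) * K ^ (j + 1) :=
          mul_le_mul_of_nonneg_left hMK (pow_nonneg (inv_nonneg.mpr hlam.le) _)
      _ = (K * lam⁻¹) ^ (j + 1) := by rw [mul_pow K lam⁻¹ (j + 1)]; exact mul_comm _ _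
  -- Faà di Bruno
  have key := norm_iteratedFDerivWithin_comp_le (𝕜 := ℝ) (g := Gt) (f := Ft) (n := ℓ)
    (s := Set.Ioi 0) (t := Set.Ioi 0) (N := (ℓ : WithTop ℕ∞)) hGt_cd hFt_cd le_rfl
    (uniqueDiffOn_Ioi 0) (uniqueDiffOn_Ioi 0) hmaps hlammem hCb hDb
  rw [hcomp]
  have habs : |iteratedDeriv ℓ (Gt ∘ Ft) lam|
      = ‖iteratedFDerivWithin ℝ ℓ (Gt ∘ Ft) (Set.Ioi 0) lam‖ := by
    rw [iteratedFDerivWithin_of_isOpen ℓ isOpen_Ioi hlammem,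
      norm_iteratedFDeriv_eq_norm_iteratedDeriv, Real.norm_eq_abs]
  rw [habs]
  refine key.trans (le_of_eq ?_)
  have hrpow : lam ^ (-1 - (ℓ : ℝ)) = lam⁻¹ * (lam⁻¹) ^ ℓ := by
    rw [show (-1 - (ℓ : ℝ)) = -((ℓ + 1 : ℕ) : ℝ) from by push_cast; ring,
      Real.rpow_neg hlam.le, Real.rpow_natCast, ← inv_pow, _root_.pow_succ']
  rw [hrpow, hCg, mul_pow]
  ring
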